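/- Let Γ be a subgroup of E(n), Γ* a finite-index normal subgroup, and suppose every element (h,b) ∈ Γ* has b⊥ = 0, where b⊥ is the orthogonal projection onto a subspace V⊥ invariant under all ψ(Γ). Then there exists a constant C such that ‖a⊥‖ ≤ C for all (g,a) ∈ Γ. -/

import Mathlib

open scoped RealInnerProductSpace

/-- If a linear isometry equivalence of a Euclidean space maps a subspace `W` into itself,
it maps `Wᗮ` into itself. -/
lemma linIso_perp_invariant {n : ℕ} (W : Submodule ℝ (EuclideanSpace ℝ (Fin n)))
    (L : EuclideanSpace ℝ (Fin n) ≃ₗᵢ[ℝ] EuclideanSpace ℝ (Fin n))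
    (hW : ∀ w ∈ W, L w ∈ W) {x : EuclideanSpace ℝ (Fin n)} (hx : x ∈ Wᗮ) :
    L x ∈ Wᗮ := by
  have hmap : W.map (L.toLinearEquiv : EuclideanSpace ℝ (Fin n) →ₗ[ℝ] EuclideanSpace ℝ (Fin n))
      = W := by
    apply Submodule.eq_of_le_of_finrank_le
    · rintro y ⟨w, hw, rfl⟩
      exact hW w hw
    · rw [LinearEquiv.finrank_map_eq]
  intro w hw
  rw [← hmap] at hw
  obtain ⟨w', hw', rfl⟩ := hw
  show ⟪L w', L x⟫ = (0:ℝ)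
  rw [L.inner_map_map w' x]
  exact hx w' hw'

/-- Let `Γ` be a subgroup of `E(n)` (the isometry group of `ℝⁿ`), `Γ*` a
finite-index normal subgroup, and suppose every element of `Γ*` has vanishing
`V⊥`-component of its translation part (the translation part of `γ` is `γ 0`, and the
`V⊥`-component is the orthogonal projection onto the subspace `W = V⊥`), where `W` is
invariant under the rotational parts of all elements of `Γ`.  Then there is a constant
`C` with `‖a⊥‖ ≤ C` for all `(g,a) ∈ Γ`. -/
theorem translation_part_perp_bounded (n : ℕ)
    (Γ Γs : Subgroup (EuclideanSpace ℝ (Fin n) ≃ᵢ EuclideanSpace ℝ (Fin n)))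
    (hle : Γs ≤ Γ)
    (hnorm : (Γs.subgroupOf Γ).Normal) (hfi : (Γs.subgroupOf Γ).FiniteIndex)
    (W : Submodule ℝ (EuclideanSpace ℝ (Fin n)))
    (hWinv : ∀ γ ∈ Γ, ∀ w ∈ W, γ w - γ 0 ∈ W)
    (hperp : ∀ γ ∈ Γs, (W.orthogonalProjection (γ 0) : EuclideanSpace ℝ (Fin n)) = 0) :
    ∃ C : ℝ, ∀ γ ∈ Γ, ‖(W.orthogonalProjection (γ 0) : EuclideanSpace ℝ (Fin n))‖ ≤ C := by
  set H := Γs.subgroupOf Γ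
  haveI : Finite (Γ ⧸ H) := Subgroup.finite_quotient_of_finiteIndex (H := H)
  obtain ⟨C, hC⟩ := Finite.exists_le fun q : Γ ⧸ H =>
    ‖(W.orthogonalProjection ((q.out : EuclideanSpace ℝ (Fin n) ≃ᵢ EuclideanSpace ℝ (Fin n)) 0) :
      EuclideanSpace ℝ (Fin n))‖
  refine ⟨C, fun γ hγ => ?_⟩
  set γ' : Γ := ⟨γ, hγ⟩
  set q : Γ ⧸ H := QuotientGroup.mk γ'
  set δ : Γ := q.out
  have hδγ : δ⁻¹ * γ' ∈ H := QuotientGroup.eq.mp (QuotientGroup.out_eq' q)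
  set h : Γ := δ⁻¹ * γ'
  have hhΓs : (h : EuclideanSpace ℝ (Fin n) ≃ᵢ EuclideanSpace ℝ (Fin n)) ∈ Γs :=
    (Subgroup.mem_subgroupOf).mp hδγ
  -- γ = δ * h as isometries
  have hfact : γ = (δ : EuclideanSpace ℝ (Fin n) ≃ᵢ EuclideanSpace ℝ (Fin n)) * h := by
    have : γ' = δ * h := (mul_inv_cancel_left δ γ').symm
    simpa using congrArg (Subtype.val) this
  have hγ0 : γ 0 = (δ : EuclideanSpace ℝ (Fin n) ≃ᵢ EuclideanSpace ℝ (Fin n))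
      ((h : EuclideanSpace ℝ (Fin n) ≃ᵢ EuclideanSpace ℝ (Fin n)) 0) := by
    rw [hfact]; rfl
  -- h 0 ∈ Wᗮ
  have hh0 : (h : EuclideanSpace ℝ (Fin n) ≃ᵢ EuclideanSpace ℝ (Fin n)) 0 ∈ Wᗮ :=
    Submodule.orthogonalProjectionOnto_eq_zero_iff.mp (Submodule.coe_eq_zero.mp (hperp _ hhΓs))
  -- ψ(δ) preserves Wᗮ
  set δiso : EuclideanSpace ℝ (Fin n) ≃ᵢ EuclideanSpace ℝ (Fin n) := ↑δ
  set L := δiso.toRealLinearIsometryEquiv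
  have hLW : ∀ w ∈ W, L w ∈ W := by
    intro w hw
    simpa [L] using hWinv δiso δ.2 w hw
  have hperpmem : L ((h : EuclideanSpace ℝ (Fin n) ≃ᵢ EuclideanSpace ℝ (Fin n)) 0) ∈ Wᗮ :=
    linIso_perp_invariant W L hLW hh0
  -- compute the projection of γ 0
  have key : (W.orthogonalProjection (γ 0) : EuclideanSpace ℝ (Fin n))
      = (W.orthogonalProjection (δiso 0) : EuclideanSpace ℝ (Fin n)) := by
    have hsplit : γ 0 = L ((h : EuclideanSpace ℝ (Fin n) ≃ᵢ EuclideanSpace ℝ (Fin n)) 0)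
        + δiso 0 := by
      rw [hγ0]
      simp [L, sub_add_cancel]
    rw [hsplit, map_add]
    rw [Submodule.orthogonalProjectionOnto_eq_zero_iff.mpr hperpmem]
    simp
  rw [key]
  exact hC q
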